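/- arXiv:math/0502182 — 4 statements merged into one kernel-verified Lean document; each statement's English description precedes it below -/
import Mathlib

section
/- Let (b_n)_{n≥1} be a nondecreasing sequence of positive reals tending to +∞ and (a_n)_{n≥1} a real sequence. If liminf_{n→∞} Σ_{k=1}^n a_k/b_k is finite, then liminf_{n→∞} (1/b_n) Σ_{k=1}^n a_k ≤ 0. -/
open Filter Finset

/-- "À la Kronecker" lemma: if `(b n)` is nondecreasing, positive, tending to `+∞`,
and `liminf_n ∑_{k=1}^n a k / b k` is finite, then
`liminf_n (1 / b n) * ∑_{k=1}^n a k ≤ 0` (in `EReal`, so finiteness issues are handled). -/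
theorem kronecker_variant (a b : ℕ → ℝ)
    (hbpos : ∀ n, 1 ≤ n → 0 < b n)
    (hbmono : ∀ n, b n ≤ b (n + 1))
    (hbtop : Filter.Tendsto b Filter.atTop Filter.atTop)
    (hfin : ∃ L : ℝ,
      Filter.liminf (fun n => ((∑ k ∈ Finset.Icc 1 n, a k / b k : ℝ) : EReal))
        Filter.atTop = (L : EReal)) :
    Filter.liminf (fun n => (((1 / b n) * ∑ k ∈ Finset.Icc 1 n, a k : ℝ) : EReal))
      Filter.atTop ≤ (0 : EReal) := by
  obtain ⟨L, hL⟩ := hfin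
  -- notation
  have habel : ∀ n, ∑ k ∈ Finset.Icc 1 n, a k
      = b n * (∑ k ∈ Finset.Icc 1 n, a k / b k)
        - ∑ k ∈ Finset.range n, (b (k+1) - b k) * (∑ j ∈ Finset.Icc 1 k, a j / b j) := by
    intro n
    induction n with
    | zero => simp
    | succ n ih =>
      have hb : b (n+1) ≠ 0 := (hbpos (n+1) (by omega)).ne'
      rw [Finset.sum_Icc_succ_top (by omega : 1 ≤ n+1), ih, Finset.sum_range_succ,
        Finset.sum_Icc_succ_top (by omega : 1 ≤ n+1)]
      field_simp
      ring
  have key : ∀ ε : ℝ, 0 < ε →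
      Filter.liminf (fun n => (((1 / b n) * ∑ k ∈ Finset.Icc 1 n, a k : ℝ) : EReal))
        Filter.atTop ≤ ((3*ε : ℝ) : EReal) := by
    intro ε hε
    have hev : ∀ᶠ n in atTop, L - ε < ∑ k ∈ Finset.Icc 1 n, a k / b k := by
      have h1 : ((L - ε : ℝ) : EReal)
          < liminf (fun n => ((∑ k ∈ Finset.Icc 1 n, a k / b k : ℝ) : EReal)) atTop := by
        rw [hL]; exact_mod_cast (by linarith : L - ε < L)
      filter_upwards [Filter.eventually_lt_of_lt_liminf h1] with n hn
      exact_mod_cast hn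
    have hfreq : ∃ᶠ n in atTop, ∑ k ∈ Finset.Icc 1 n, a k / b k < L + ε := by
      have h1 : liminf (fun n => ((∑ k ∈ Finset.Icc 1 n, a k / b k : ℝ) : EReal)) atTop
          < ((L + ε : ℝ) : EReal) := by
        rw [hL]; exact_mod_cast (by linarith : L < L + ε)
      apply (Filter.frequently_lt_of_liminf_lt (by isBoundedDefault) h1).mono
      intro n hn; exact_mod_cast hn
    obtain ⟨N₀, hN₀⟩ := Filter.eventually_atTop.1 hev
    set C : ℝ := ∑ k ∈ Finset.range N₀, (b (k+1) - b k) * (∑ j ∈ Finset.Icc 1 k, a j / b j)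
      with hCdef
    set D : ℝ := (L - ε) * b N₀ - C with hDdef
    have hfr2 : ∃ᶠ n in atTop, (∑ k ∈ Finset.Icc 1 n, a k / b k < L + ε)
        ∧ (|D|/ε ≤ b n ∧ (N₀ ≤ n ∧ 1 ≤ n)) :=
      hfreq.and_eventually ((hbtop.eventually_ge_atTop (|D|/ε)).and
        ((eventually_ge_atTop N₀).and (eventually_ge_atTop 1)))
    have hfr3 : ∃ᶠ n in atTop, (1 / b n) * ∑ k ∈ Finset.Icc 1 n, a k ≤ 3*ε := by
      apply hfr2.mono
      rintro n ⟨hSn, hbig, hNn, h1n⟩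
      have hbn : 0 < b n := hbpos n h1n
      have htel : ∑ k ∈ Finset.Ico N₀ n, (b (k+1) - b k) = b n - b N₀ := by
        rw [Finset.sum_Ico_eq_sub _ hNn, Finset.sum_range_sub, Finset.sum_range_sub]
        ring
      have hlow : C + (b n - b N₀) * (L - ε)
          ≤ ∑ k ∈ Finset.range n, (b (k+1) - b k) * (∑ j ∈ Finset.Icc 1 k, a j / b j) := by
        rw [← Finset.sum_range_add_sum_Ico _ hNn]
        have h2 : (b n - b N₀) * (L - ε)
            ≤ ∑ k ∈ Finset.Ico N₀ n, (b (k+1) - b k) * (∑ j ∈ Finset.Icc 1 k, a j / b j) := by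
          calc (b n - b N₀) * (L - ε)
              = ∑ k ∈ Finset.Ico N₀ n, (b (k+1) - b k) * (L - ε) := by
                rw [← Finset.sum_mul, htel]
            _ ≤ _ := by
                apply Finset.sum_le_sum
                intro k hk
                exact mul_le_mul_of_nonneg_left
                  (le_of_lt (hN₀ k (Finset.mem_Ico.1 hk).1))
                  (by linarith [hbmono k])
        linarith
      have hTn : (1 / b n) * ∑ k ∈ Finset.Icc 1 n, a k
          = (∑ k ∈ Finset.Icc 1 n, a k / b k)
            - (1 / b n) * ∑ k ∈ Finset.range n,
                (b (k+1) - b k) * (∑ j ∈ Finset.Icc 1 k, a j / b j) := by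
        rw [habel n]
        field_simp
      have hD : D / b n ≤ ε := by
        have h1 : |D| ≤ b n * ε := (div_le_iff₀ hε).1 hbig
        have h2 : D ≤ |D| := le_abs_self D
        rw [div_le_iff₀ hbn]
        nlinarith
      have halg : (1 / b n) * (C + (b n - b N₀) * (L - ε)) = (L - ε) - D / b n := by
        field_simp
        ring
      have hmul : (1 / b n) * (C + (b n - b N₀) * (L - ε))
          ≤ (1 / b n) * ∑ k ∈ Finset.range n,
              (b (k+1) - b k) * (∑ j ∈ Finset.Icc 1 k, a j / b j) :=
        mul_le_mul_of_nonneg_left hlow (by positivity)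
      rw [hTn]
      rw [halg] at hmul
      linarith
    apply Filter.liminf_le_of_frequently_le'
    apply hfr3.mono
    intro n hn
    exact_mod_cast hn
  by_contra hcon
  push_neg at hcon
  obtain ⟨c, hc0, hcX⟩ := EReal.lt_iff_exists_real_btwn.1 hcon
  have hc0' : (0:ℝ) < c := by exact_mod_cast hc0
  have := key (c/3) (by linarith)
  rw [show (3*(c/3):ℝ) = c by ring] at this
  exact absurd hcX (not_lt.2 this)
end

section
/- Assume there is Φ : S_d → ℝ, continuously differentiable on the interior of S_d with ∇Φ extending continuously to S_d, such that ∇Φ(v) = (f_i(ṽ) − f_0(ṽ))_{1≤i≤d} for all v ∈ S_d, where ṽ := (1 − Σ v_i, v_1, …, v_d). Then for every strategy x ∈ {0,…,d}^{ℕ*}, Q(x) := liminf_n (1/n) Σ_{k=0}^{n−1} f_{x_{k+1}}(bar x_k) satisfies Q(x) ≤ Q* := max_{u ∈ P_{d+1}} q(u), where q(u) := Σ_{i=0}^d u_i f_i(u). -/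
noncomputable section

/-- The simplex `S_d = {v ∈ [0,1]^d : ∑ v i ≤ 1}`. -/
def Sd (d : ℕ) : Set (EuclideanSpace ℝ (Fin d)) :=
  {v | (∀ i, v i ∈ Set.Icc (0 : ℝ) 1) ∧ ∑ i, v i ≤ 1}

/-- The probability simplex `P_{d+1} = {u ∈ [0,1]^{d+1} : ∑ u i = 1}`. -/
def Pd (d : ℕ) : Set (Fin (d + 1) → ℝ) :=
  {u | (∀ i, u i ∈ Set.Icc (0 : ℝ) 1) ∧ ∑ i, u i = 1}

/-- `ṽ = (1 - ∑ v i, v 1, …, v d)`. -/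
def tilde {d : ℕ} (v : EuclideanSpace ℝ (Fin d)) : Fin (d + 1) → ℝ :=
  Fin.cons (1 - ∑ i, v i) (fun i => v i)

open Filter Finset Set RealInnerProductSpace

section aux

lemma freq_incr_le (t : ℕ → ℝ) (M : ℝ) (hM : ∀ n, |t n| ≤ M) {ε : ℝ} (hε : 0 < ε) :
    ∃ᶠ n : ℕ in atTop, ((n : ℝ) + 1) * (t (n + 1) - t n) ≤ ε := by
  by_contra h
  rw [not_frequently] at h
  simp only [not_le] at h
  obtain ⟨N, hN⟩ := eventually_atTop.1 h
  have key : ∀ n, N ≤ n → t N + ε * ∑ i ∈ Finset.Ico N n, (1 / (i + 1) : ℝ) ≤ t n := by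
    intro n hn
    induction n, hn using Nat.le_induction with
    | base => simp
    | succ n hn ih =>
      rw [Finset.sum_Ico_succ_top hn, mul_add, ← add_assoc]
      have h1 : ε * (1 / ((n : ℝ) + 1)) < t (n + 1) - t n := by
        have h2 := hN n hn
        have h3 : (0:ℝ) < (n:ℝ) + 1 := by positivity
        rw [mul_one_div, div_lt_iff₀ h3]
        nlinarith
      linarith
  have h2 : Tendsto (fun n => t N + ε * ∑ i ∈ Finset.Ico N n, (1 / (i + 1) : ℝ)) atTop atTop := by
    apply tendsto_atTop_add_const_left
    apply Tendsto.const_mul_atTop hε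
    have h5 := (Real.tendsto_sum_range_one_div_nat_succ_atTop).atTop_add
      (tendsto_const_nhds (x := -(∑ i ∈ Finset.range N, (1/((i:ℝ)+1):ℝ))))
    apply h5.congr'
    filter_upwards [eventually_ge_atTop N] with n hn
    rw [Finset.sum_Ico_eq_sub _ hn]
    ring
  have h3 : Tendsto t atTop atTop := tendsto_atTop_mono' atTop (eventually_atTop.2 ⟨N, key⟩) h2
  obtain ⟨n, hn⟩ := (h3.eventually_ge_atTop (M + 1)).exists
  have h4 := abs_le.1 (hM n)
  linarith


lemma mvt_segment {d : ℕ} (Φ : EuclideanSpace ℝ (Fin d) → ℝ)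
    (G : EuclideanSpace ℝ (Fin d) → EuclideanSpace ℝ (Fin d))
    (w w' : EuclideanSpace ℝ (Fin d))
    (h : ∀ t ∈ Set.Icc (0:ℝ) 1, HasGradientAt Φ (G (w + t • (w' - w))) (w + t • (w' - w))) :
    ∃ t ∈ Set.Icc (0:ℝ) 1, Φ w' - Φ w = ⟪G (w + t • (w' - w)), w' - w⟫ := by
  set γ : ℝ → EuclideanSpace ℝ (Fin d) := fun t => w + t • (w' - w) with hγ
  have hderiv : ∀ t ∈ Set.Icc (0:ℝ) 1,
      HasDerivAt (fun s => Φ (γ s)) ⟪G (γ t), w' - w⟫ t := by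
    intro t ht
    have hγd : HasDerivAt γ (w' - w) t := by
      have : HasDerivAt (fun s : ℝ => s • (w' - w)) ((1:ℝ) • (w' - w)) t :=
        (hasDerivAt_id t).smul_const (w' - w)
      simpa [hγ] using this.const_add w
    have hF := (h t ht).hasFDerivAt
    have := hF.comp_hasDerivAt t hγd
    simpa [InnerProductSpace.toDual_apply_apply, Function.comp_def] using this
  have hcont : ContinuousOn (fun s => Φ (γ s)) (Set.Icc (0:ℝ) 1) :=
    fun t ht => ((hderiv t ht).continuousAt).continuousWithinAt
  obtain ⟨c, hc, hceq⟩ := exists_hasDerivAt_eq_slope (fun s => Φ (γ s))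
    (fun t => ⟪G (γ t), w' - w⟫) one_pos hcont
    (fun t ht => hderiv t (Set.mem_Icc_of_Ioo ht))
  refine ⟨c, Set.mem_Icc_of_Ioo hc, ?_⟩
  have h1 : γ 1 = w' := by simp [hγ]
  have h0 : γ 0 = w := by simp [hγ]
  rw [h1, h0] at hceq
  show Φ w' - Φ w = ⟪G (γ c), w' - w⟫
  rw [hceq]
  norm_num



lemma Sd_convex (d : ℕ) : Convex ℝ (Sd d) := by
  intro v hv w hw a b ha hb hab
  constructor
  · intro i
    have h1 := (hv.1 i); have h2 := (hw.1 i)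
    simp only [Set.mem_Icc] at *
    constructor
    · have : (a • v + b • w) i = a * v i + b * w i := rfl
      rw [this]; nlinarith [h1.1, h2.1]
    · have : (a • v + b • w) i = a * v i + b * w i := rfl
      rw [this]; nlinarith [h1.2, h2.2]
  · have : ∑ i, (a • v + b • w) i = a * ∑ i, v i + b * ∑ i, w i := by
      rw [Finset.mul_sum, Finset.mul_sum, ← Finset.sum_add_distrib]
      rfl
    rw [this]; nlinarith [hv.2, hw.2]

lemma norm_le_of_mem_unit {d : ℕ} (y : EuclideanSpace ℝ (Fin d))
    (h : ∀ i, |y i| ≤ 1) : ‖y‖ ≤ (d : ℝ) + 1 := by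
  rw [EuclideanSpace.norm_eq]
  have h1 : ∑ i, y i ^ 2 ≤ (d : ℝ) := by
    calc ∑ i, y i ^ 2 ≤ ∑ _i : Fin d, (1:ℝ) := by
          apply Finset.sum_le_sum; intro i _
          have := h i
          nlinarith [abs_nonneg (y i), neg_abs_le (y i), le_abs_self (y i)]
      _ = d := by simp
  calc Real.sqrt (∑ i, ‖y i‖ ^ 2) ≤ Real.sqrt ((d:ℝ)) := by
        apply Real.sqrt_le_sqrt
        simpa [Real.norm_eq_abs, sq_abs] using h1
    _ ≤ (d : ℝ) + 1 := by
        rw [show (d:ℝ) + 1 = Real.sqrt (((d:ℝ)+1)^2) by rw [Real.sqrt_sq (by positivity)]]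
        apply Real.sqrt_le_sqrt; nlinarith [Nat.cast_nonneg (α := ℝ) d]

lemma Sd_compact (d : ℕ) : IsCompact (Sd d) := by
  have hclosed : IsClosed (Sd d) := by
    have h1 : Sd d = (⋂ i, {v : EuclideanSpace ℝ (Fin d) | v i ∈ Set.Icc (0:ℝ) 1}) ∩
        {v | ∑ i, v i ≤ 1} := by
      ext v; simp [Sd, Set.mem_iInter]
    rw [h1]
    apply IsClosed.inter
    · exact isClosed_iInter fun i => IsClosed.preimage ((continuous_apply i).comp (PiLp.continuous_ofLp 2 _)) isClosed_Icc
    · exact isClosed_le (continuous_finset_sum _ fun i _ => (continuous_apply i).comp (PiLp.continuous_ofLp 2 _)) continuous_const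
  have hbdd : Bornology.IsBounded (Sd d) := by
    apply Bornology.IsBounded.subset (Metric.isBounded_closedBall (x := (0 : EuclideanSpace ℝ (Fin d))) (r := (d:ℝ)+1))
    intro v hv
    simp only [Metric.mem_closedBall, dist_zero_right]
    exact norm_le_of_mem_unit v fun i => abs_le.2 ⟨by linarith [(hv.1 i).1], (hv.1 i).2⟩
  exact Metric.isCompact_of_isClosed_isBounded hclosed hbdd

-- interior point
lemma Sd_interior_point (d : ℕ) :
    (WithLp.toLp 2 (fun _ => 1 / (2 * ((d:ℝ) + 1))) : EuclideanSpace ℝ (Fin d)) ∈ interior (Sd d) := by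
  set c : EuclideanSpace ℝ (Fin d) := WithLp.toLp 2 (fun _ => 1 / (2 * ((d:ℝ) + 1))) with hc
  have hU : IsOpen {v : EuclideanSpace ℝ (Fin d) | (∀ i, 0 < v i) ∧ ∑ i, v i < 1} := by
    have : {v : EuclideanSpace ℝ (Fin d) | (∀ i, 0 < v i) ∧ ∑ i, v i < 1}
        = (⋂ i, {v : EuclideanSpace ℝ (Fin d) | 0 < v i}) ∩ {v | ∑ i, v i < 1} := by
      ext v; simp [Set.mem_iInter]
    rw [this]
    apply IsOpen.inter
    · exact isOpen_iInter_of_finite fun i => isOpen_lt continuous_const ((continuous_apply i).comp (PiLp.continuous_ofLp 2 _))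
    · exact isOpen_lt (continuous_finset_sum _ fun i _ => (continuous_apply i).comp (PiLp.continuous_ofLp 2 _)) continuous_const
  have hsub : {v : EuclideanSpace ℝ (Fin d) | (∀ i, 0 < v i) ∧ ∑ i, v i < 1} ⊆ Sd d := by
    intro v hv
    refine ⟨fun i => ⟨le_of_lt (hv.1 i), ?_⟩, le_of_lt hv.2⟩
    have : v i ≤ ∑ j, v j := by
      apply Finset.single_le_sum (f := fun j => v j) (fun j _ => le_of_lt (hv.1 j)) (Finset.mem_univ i)
    linarith [hv.2]
  apply interior_maximal hsub hU
  constructor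
  · intro i; show (0:ℝ) < 1 / (2 * ((d:ℝ) + 1)); positivity
  · have : ∑ _i : Fin d, (1 / (2 * ((d:ℝ) + 1))) = d * (1 / (2 * ((d:ℝ)+1))) := by
      simp [mul_comm]
    show ∑ _i : Fin d, (1 / (2 * ((d:ℝ) + 1))) < 1
    rw [this]
    rw [mul_one_div, div_lt_one (by positivity)]
    linarith [Nat.cast_nonneg (α := ℝ) d]

end aux


set_option maxHeartbeats 2000000 in
/-- Main theorem (Benaïm–Ben Arous): under the potential assumption, every strategy `x`
satisfies `Q(x) = liminf_n (1/n) ∑_{k<n} f (x (k+1)) (x̄ k) ≤ Q* = max_{P_{d+1}} q`. -/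
theorem bandit_main (d : ℕ)
    (f : Fin (d + 1) → (Fin (d + 1) → ℝ) → ℝ)
    (hf : ∀ i, ContinuousOn (f i) (Set.Icc (0 : Fin (d + 1) → ℝ) 1))
    (Φ : EuclideanSpace ℝ (Fin d) → ℝ)
    (G : EuclideanSpace ℝ (Fin d) → EuclideanSpace ℝ (Fin d))
    (hGcont : ContinuousOn G (Sd d))
    (hgrad : ∀ v ∈ interior (Sd d), HasGradientAt Φ (G v) v)
    (hG : ∀ v ∈ Sd d, ∀ i : Fin d, G v i = f i.succ (tilde v) - f 0 (tilde v))
    (x : ℕ → Fin (d + 1)) (barx : ℕ → Fin (d + 1) → ℝ)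
    (hbar0 : barx 0 ∈ Pd d)
    (hbar : ∀ n, 1 ≤ n → ∀ i,
      barx n i = (1 / (n : ℝ)) * ∑ k ∈ Finset.Icc 1 n, (if x k = i then (1 : ℝ) else 0))
    (q : (Fin (d + 1) → ℝ) → ℝ) (hq : ∀ u, q u = ∑ i, u i * f i u) :
    Filter.liminf
      (fun n : ℕ => (1 / (n : ℝ)) * ∑ k ∈ Finset.range n, f (x (k + 1)) (barx k))
      Filter.atTop ≤ sSup (q '' Pd d) := by
  classical
  set Qs : ℝ := sSup (q '' Pd d) with hQs
  set A : ℕ → ℝ := fun n => (1 / (n : ℝ)) * ∑ k ∈ Finset.range n, f (x (k + 1)) (barx k)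
    with hA
  -- bound on f
  obtain ⟨Mf, hMf0, hMf⟩ : ∃ Mf : ℝ, 0 ≤ Mf ∧
      ∀ i u, u ∈ Set.Icc (0 : Fin (d+1) → ℝ) 1 → |f i u| ≤ Mf := by
    choose C hC using fun i => (isCompact_Icc (a := (0 : Fin (d+1) → ℝ)) (b := 1)
      ).exists_bound_of_continuousOn (hf i)
    refine ⟨∑ j, |C j|, Finset.sum_nonneg fun j _ => abs_nonneg _, fun i u hu => ?_⟩
    calc |f i u| ≤ C i := by simpa using hC i u hu
      _ ≤ |C i| := le_abs_self _
      _ ≤ ∑ j, |C j| := Finset.single_le_sum (f := fun j => |C j|)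
            (fun j _ => abs_nonneg _) (Finset.mem_univ i)
  -- barx n ∈ Pd d for all n
  have hPdn : ∀ n, barx n ∈ Pd d := by
    intro n
    rcases Nat.eq_zero_or_pos n with rfl | hn
    · exact hbar0
    have hn' : (0:ℝ) < n := by exact_mod_cast hn
    constructor
    · intro i
      rw [hbar n hn i]
      constructor
      · apply mul_nonneg (by positivity)
        apply Finset.sum_nonneg; intro k _; split <;> norm_num
      · rw [one_div, inv_mul_le_iff₀ hn', mul_one]
        calc (∑ k ∈ Finset.Icc 1 n, if x k = i then (1:ℝ) else 0)
            ≤ ∑ k ∈ Finset.Icc 1 n, 1 := by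
              apply Finset.sum_le_sum; intro k _; split <;> norm_num
          _ = n := by simp [Nat.Icc_eq_range', Nat.card_Icc]
    · calc ∑ i, barx n i
          = ∑ i, (1/(n:ℝ)) * ∑ k ∈ Finset.Icc 1 n, (if x k = i then (1:ℝ) else 0) :=
            Finset.sum_congr rfl fun i _ => hbar n hn i
        _ = (1/(n:ℝ)) * ∑ i, ∑ k ∈ Finset.Icc 1 n, (if x k = i then (1:ℝ) else 0) := by
            rw [← Finset.mul_sum]
        _ = (1/(n:ℝ)) * ∑ k ∈ Finset.Icc 1 n, ∑ i, (if x k = i then (1:ℝ) else 0) := by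
            rw [Finset.sum_comm]
        _ = (1/(n:ℝ)) * ∑ k ∈ Finset.Icc 1 n, (1:ℝ) := by
            congr 1
            exact Finset.sum_congr rfl fun k _ => by rw [Finset.sum_ite_eq]; simp
        _ = 1 := by
            simp only [Finset.sum_const, Nat.card_Icc, nsmul_eq_mul]
            field_simp
            simp
  -- Pd compact and q bounds
  have hPdsub : Pd d ⊆ Set.Icc (0 : Fin (d+1) → ℝ) 1 := by
    intro u hu
    constructor <;> intro i
    · exact (hu.1 i).1
    · exact (hu.1 i).2
  have hQle : ∀ n, q (barx n) ≤ Qs := by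
    have hPdcomp : IsCompact (Pd d) := by
      apply IsCompact.of_isClosed_subset (isCompact_Icc (a := (0 : Fin (d+1) → ℝ)) (b := 1))
      · have : Pd d = (⋂ i, {u : Fin (d+1) → ℝ | u i ∈ Set.Icc (0:ℝ) 1}) ∩
            {u | ∑ i, u i = 1} := by
          ext u; simp [Pd, Set.mem_iInter]
        rw [this]
        apply IsClosed.inter
        · exact isClosed_iInter fun i => IsClosed.preimage (continuous_apply i) isClosed_Icc
        · exact isClosed_eq (continuous_finset_sum _ fun i _ => continuous_apply i)
            continuous_const
      · exact hPdsub
    have hqcont : ContinuousOn q (Pd d) := by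
      have : ContinuousOn q (Set.Icc (0 : Fin (d+1) → ℝ) 1) := by
        have : ContinuousOn (fun u => ∑ i, u i * f i u)
            (Set.Icc (0 : Fin (d+1) → ℝ) 1) := by
          apply continuousOn_finset_sum
          intro i _
          exact ((continuous_apply i).continuousOn).mul (hf i)
        apply this.congr
        intro u _; exact hq u
      exact this.mono hPdsub
    have hbdd : BddAbove (q '' Pd d) := (hPdcomp.image_of_continuousOn hqcont).bddAbove
    intro n
    exact le_csSup hbdd ⟨barx n, hPdn n, rfl⟩
  -- boundedness of A
  have hAbd : ∀ n, |A n| ≤ Mf := by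
    intro n
    rcases Nat.eq_zero_or_pos n with rfl | hn
    · simp [hA, hMf0]
    have hn' : (0:ℝ) < n := by exact_mod_cast hn
    rw [hA]
    simp only
    rw [abs_mul, abs_of_nonneg (by positivity : (0:ℝ) ≤ 1/(n:ℝ))]
    rw [one_div, inv_mul_le_iff₀ hn']
    calc |∑ k ∈ Finset.range n, f (x (k + 1)) (barx k)|
        ≤ ∑ k ∈ Finset.range n, |f (x (k + 1)) (barx k)| := Finset.abs_sum_le_sum_abs _ _
      _ ≤ ∑ k ∈ Finset.range n, Mf := by
          apply Finset.sum_le_sum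
          intro k _
          exact hMf _ _ (hPdsub (hPdn k))
      _ = ↑n * Mf := by simp
  have hAlow : Filter.IsBoundedUnder (· ≥ ·) Filter.atTop A :=
    ⟨-Mf, Filter.eventually_atTop.2 ⟨0, fun n _ => (abs_le.1 (hAbd n)).1⟩⟩
  -- main reduction
  have key : ∀ ε : ℝ, 0 < ε → Filter.liminf A Filter.atTop ≤ Qs + ε := by
    intro ε hε
    set R : ℝ := (d:ℝ) + 1 with hR
    have hR1 : (1:ℝ) ≤ R := by
      rw [hR]; have : (0:ℝ) ≤ (d:ℝ) := Nat.cast_nonneg d; linarith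
    set B : ℝ := 2 * R with hB
    have hB0 : (0:ℝ) < B := by rw [hB]; linarith
    set ε1 : ℝ := ε / (2 * B) with hε1
    have hε10 : 0 < ε1 := by rw [hε1]; positivity
    obtain ⟨δ, hδ0, hδG⟩ : ∃ δ > 0, ∀ a ∈ Sd d, ∀ b ∈ Sd d,
        dist a b < δ → dist (G a) (G b) < ε1 := by
      have huc := (Sd_compact d).uniformContinuousOn_of_continuous hGcont
      rw [Metric.uniformContinuousOn_iff] at huc
      obtain ⟨δ, hδ0, h⟩ := huc ε1 hε10
      exact ⟨δ, hδ0, fun a ha b hb hd => h a ha b hb hd⟩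
    set c : EuclideanSpace ℝ (Fin d) := WithLp.toLp 2 (fun _ => 1 / (2 * ((d:ℝ) + 1))) with hc
    have hcint : c ∈ interior (Sd d) := Sd_interior_point d
    have hcS : c ∈ Sd d := interior_subset hcint
    set lam : ℝ := min (1/2) (δ / (4 * B)) with hlam
    have hlam0 : 0 < lam := by
      rw [hlam]; apply lt_min (by norm_num); positivity
    have hlam1 : lam < 1 := lt_of_le_of_lt (min_le_left _ _) (by norm_num)
    have hlamδ : B * lam ≤ δ / 4 := by
      have h1 : lam ≤ δ / (4 * B) := min_le_right _ _
      calc B * lam ≤ B * (δ / (4 * B)) := by nlinarith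
        _ = δ / 4 := by field_simp
    have h1lam : (0:ℝ) < 1 - lam := by linarith
    set T : EuclideanSpace ℝ (Fin d) → EuclideanSpace ℝ (Fin d) :=
      fun y => (1 - lam) • y + lam • c with hT
    have hTint : ∀ y ∈ Sd d, T y ∈ interior (Sd d) := fun y hy =>
      (Sd_convex d).combo_self_interior_mem_interior hy hcint (by linarith) hlam0 (by ring)
    obtain ⟨M, hM0, hMΦ⟩ : ∃ M : ℝ, 0 ≤ M ∧ ∀ y ∈ Sd d, |Φ (T y)| ≤ M := by
      have hTc : Continuous T := by
        apply Continuous.add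
        · exact continuous_const_smul _
        · exact continuous_const
      have hcontT : ContinuousOn (fun y => Φ (T y)) (Sd d) := by
        intro y hy
        have hdiff := ((hgrad (T y) (hTint y hy)).hasFDerivAt).differentiableAt.continuousAt
        exact ContinuousAt.continuousWithinAt (by exact hdiff.comp hTc.continuousAt)
      obtain ⟨M, hM⟩ := (Sd_compact d).exists_bound_of_continuousOn hcontT
      refine ⟨max M 0, le_max_right _ _, fun y hy => ?_⟩
      calc |Φ (T y)| = ‖Φ (T y)‖ := rfl
        _ ≤ M := hM y hy
        _ ≤ max M 0 := le_max_left _ _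
    obtain ⟨N, hN1, hNδ⟩ : ∃ N : ℕ, 1 ≤ N ∧ ∀ k : ℕ, N ≤ k → B / ((k:ℝ)+1) ≤ δ/2 := by
      obtain ⟨N0, hN0⟩ := exists_nat_gt (2 * B / δ)
      refine ⟨max 1 N0, le_max_left _ _, fun k hk => ?_⟩
      have h1 : (N0 : ℝ) ≤ (k:ℝ) := by
        exact_mod_cast le_trans (le_max_right 1 N0) hk
      have h2 : 2 * B / δ < (k:ℝ) + 1 := by linarith
      rw [div_le_div_iff₀ (by positivity) (by norm_num)]
      rw [div_lt_iff₀ hδ0] at h2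
      linarith
    -- sequences
    set v : ℕ → EuclideanSpace ℝ (Fin d) := fun n => WithLp.toLp 2 (fun i => barx n i.succ) with hv
    have hsumv : ∀ n, ∑ i, v n i = 1 - barx n 0 := by
      intro n
      have h1 : ∑ i, barx n i = 1 := (hPdn n).2
      rw [Fin.sum_univ_succ] at h1
      have : ∑ i : Fin d, v n i = ∑ i : Fin d, barx n i.succ := rfl
      rw [this]; linarith
    have hvS : ∀ n, v n ∈ Sd d := by
      intro n
      refine ⟨fun i => (hPdn n).1 i.succ, ?_⟩
      rw [hsumv n]
      have := ((hPdn n).1 0).1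
      linarith
    have htilde : ∀ n, tilde (v n) = barx n := by
      intro n
      funext i
      refine Fin.cases ?_ (fun j => ?_) i
      · show tilde (v n) 0 = barx n 0
        rw [tilde, Fin.cons_zero, hsumv n]; ring
      · show tilde (v n) j.succ = barx n j.succ
        rw [tilde, Fin.cons_succ]
    set dlt : ℕ → EuclideanSpace ℝ (Fin d) :=
      fun k => WithLp.toLp 2 (fun i => if x (k+1) = i.succ then (1:ℝ) else 0) with hdlt
    set u : ℕ → EuclideanSpace ℝ (Fin d) := fun k => dlt k - v k with hu
    have hrec : ∀ k : ℕ, 1 ≤ k → v (k+1) = v k + ((1:ℝ)/((k:ℝ)+1)) • u k := by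
      intro k hk
      have hk0 : ((k:ℝ)) ≠ 0 := by
        have : (0:ℝ) < k := by exact_mod_cast hk
        linarith
      ext i
      have e1 : barx (k+1) i.succ = (1/((k:ℝ)+1)) * ∑ j ∈ Finset.Icc 1 (k+1),
          (if x j = i.succ then (1:ℝ) else 0) := by
        have := hbar (k+1) (by omega) i.succ
        simpa using this
      have e2 : barx k i.succ = (1/(k:ℝ)) * ∑ j ∈ Finset.Icc 1 k,
          (if x j = i.succ then (1:ℝ) else 0) := hbar k hk i.succ
      have e3 : ∑ j ∈ Finset.Icc 1 (k+1), (if x j = i.succ then (1:ℝ) else 0)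
          = (∑ j ∈ Finset.Icc 1 k, (if x j = i.succ then (1:ℝ) else 0))
            + (if x (k+1) = i.succ then (1:ℝ) else 0) := by
        rw [Finset.sum_Icc_succ_top (by omega)]
      have e4 : ∑ j ∈ Finset.Icc 1 k, (if x j = i.succ then (1:ℝ) else 0)
          = (k:ℝ) * barx k i.succ := by
        rw [e2]; field_simp
      show barx (k+1) i.succ = barx k i.succ
          + (1/((k:ℝ)+1)) * ((if x (k+1) = i.succ then (1:ℝ) else 0) - barx k i.succ)
      rw [e1, e3, e4]
      have hk10 : ((k:ℝ)+1) ≠ 0 := by positivity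
      field_simp
      ring
    have hnormv : ∀ n, ‖v n‖ ≤ R := by
      intro n
      apply norm_le_of_mem_unit
      intro i
      have := (hvS n).1 i
      rw [abs_le]; exact ⟨by linarith [this.1], this.2⟩
    have hnormd : ∀ k, ‖dlt k‖ ≤ R := by
      intro k
      apply norm_le_of_mem_unit
      intro i
      show |if x (k+1) = i.succ then (1:ℝ) else 0| ≤ 1
      split <;> norm_num
    have hnormu : ∀ k, ‖u k‖ ≤ B := by
      intro k
      calc ‖u k‖ = ‖dlt k - v k‖ := rfl
        _ ≤ ‖dlt k‖ + ‖v k‖ := norm_sub_le _ _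
        _ ≤ R + R := add_le_add (hnormd k) (hnormv k)
        _ = B := by rw [hB]; ring
    have hinner : ∀ k : ℕ, 1 ≤ k →
        ⟪G (v k), u k⟫ = f (x (k+1)) (barx k) - q (barx k) := by
      intro k hk
      have hGv : ∀ i : Fin d, G (v k) i
          = f i.succ (barx k) - f 0 (barx k) := by
        intro i; rw [hG (v k) (hvS k) i, htilde k]
      have hip : ⟪G (v k), u k⟫ = (∑ i, G (v k) i * dlt k i) - ∑ i, G (v k) i * v k i := by
        rw [show u k = dlt k - v k from rfl, inner_sub_right]
        congr 1 <;> rw [PiLp.inner_apply] <;> simp [RCLike.inner_apply, mul_comm]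
      have hd1 : (∑ i, G (v k) i * dlt k i) = f (x (k+1)) (barx k) - f 0 (barx k) := by
        rcases Fin.eq_zero_or_eq_succ (x (k+1)) with h0 | ⟨j, hj⟩
        · rw [h0]
          have : ∀ i : Fin d, G (v k) i * dlt k i = 0 := by
            intro i
            have : dlt k i = 0 := by
              show (if x (k+1) = i.succ then (1:ℝ) else 0) = 0
              rw [h0]; simp [(Fin.succ_ne_zero i).symm]
            rw [this, mul_zero]
          rw [Finset.sum_congr rfl fun i _ => this i]
          simp
        · rw [hj]
          have : ∀ i : Fin d, G (v k) i * dlt k i = if i = j then G (v k) i else 0 := by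
            intro i
            show G (v k) i * (if x (k+1) = i.succ then (1:ℝ) else 0) = _
            rw [hj]
            by_cases hij : i = j
            · simp [hij]
            · have : j.succ ≠ i.succ := by
                simp [Fin.succ_inj]; exact fun h => hij h.symm
              simp [this, hij]
          rw [Finset.sum_congr rfl fun i _ => this i, Finset.sum_ite_eq' Finset.univ j]
          simp [hGv j]
      have hd2 : (∑ i, G (v k) i * v k i) = q (barx k) - f 0 (barx k) := by
        have e1 : ∑ i : Fin d, barx k i.succ * f i.succ (barx k)
            = q (barx k) - barx k 0 * f 0 (barx k) := by
          rw [hq, Fin.sum_univ_succ]; ring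
        have e2 : ∑ i : Fin d, barx k i.succ = 1 - barx k 0 := by
          have := hsumv k
          rw [show (∑ i, v k i) = ∑ i : Fin d, barx k i.succ from rfl] at this
          linarith
        calc ∑ i, G (v k) i * v k i
            = ∑ i : Fin d, (f i.succ (barx k) - f 0 (barx k)) * barx k i.succ := by
              exact Finset.sum_congr rfl fun i _ => by rw [hGv i]
          _ = (∑ i : Fin d, barx k i.succ * f i.succ (barx k))
              - (∑ i : Fin d, barx k i.succ) * f 0 (barx k) := by
              rw [Finset.sum_mul, ← Finset.sum_sub_distrib]
              exact Finset.sum_congr rfl fun i _ => by ring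
          _ = q (barx k) - f 0 (barx k) := by rw [e1, e2]; ring
      rw [hip, hd1, hd2]; ring
    set w : ℕ → EuclideanSpace ℝ (Fin d) := fun n => T (v n) with hw
    set a : ℕ → ℝ := fun n => Φ (w n) with ha
    have haM : ∀ n, |a n| ≤ M := fun n => hMΦ (v n) (hvS n)
    have hwdiff : ∀ k : ℕ, 1 ≤ k → w (k+1) - w k = ((1-lam)/((k:ℝ)+1)) • u k := by
      intro k hk
      rw [hw]
      show T (v (k+1)) - T (v k) = _
      rw [hrec k hk, hT]
      simp only
      rw [smul_add, smul_smul]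
      module
    have hkey : ∀ k : ℕ, N ≤ k →
        f (x (k+1)) (barx k) ≤ q (barx k) + ε/2
          + (((k:ℝ)+1)/(1-lam)) * (a (k+1) - a k) := by
      intro k hk
      have hk1 : 1 ≤ k := le_trans hN1 hk
      have hk0 : (0:ℝ) < (k:ℝ) + 1 := by positivity
      have hseg : ∀ t ∈ Set.Icc (0:ℝ) 1,
          w k + t • (w (k+1) - w k) ∈ interior (Sd d) := by
        intro t ht
        have h1 : w k + t • (w (k+1) - w k) = T ((1-t) • v k + t • v (k+1)) := by
          show T (v k) + t • (T (v (k+1)) - T (v k)) = T ((1-t) • v k + t • v (k+1))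
          rw [hT]
          simp only
          module
        rw [h1]
        apply hTint
        exact (Sd_convex d) (hvS k) (hvS (k+1)) (by linarith [ht.2]) ht.1 (by ring)
      obtain ⟨t, ht, hmvt⟩ := mvt_segment Φ G (w k) (w (k+1))
        (fun t ht => hgrad _ (hseg t ht))
      set ξ := w k + t • (w (k+1) - w k) with hξ
      have hξS : ξ ∈ Sd d := interior_subset (hseg t ht)
      -- distance estimates
      have hd1 : ‖w (k+1) - w k‖ ≤ B / ((k:ℝ)+1) := by
        rw [hwdiff k hk1, norm_smul]
        rw [Real.norm_eq_abs, abs_of_nonneg (by positivity : (0:ℝ) ≤ (1-lam)/((k:ℝ)+1))]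
        calc (1-lam)/((k:ℝ)+1) * ‖u k‖ ≤ 1/((k:ℝ)+1) * ‖u k‖ := by
              apply mul_le_mul_of_nonneg_right _ (norm_nonneg _)
              gcongr
              linarith
          _ ≤ 1/((k:ℝ)+1) * B := by
              apply mul_le_mul_of_nonneg_left (hnormu k) (by positivity)
          _ = B / ((k:ℝ)+1) := by ring
      have hd2 : ‖w k - v k‖ ≤ B * lam := by
        have : w k - v k = lam • (c - v k) := by
          show T (v k) - v k = lam • (c - v k)
          rw [hT]; simp only; module
        rw [this, norm_smul, Real.norm_eq_abs, abs_of_nonneg (le_of_lt hlam0)]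
        calc lam * ‖c - v k‖ ≤ lam * (‖c‖ + ‖v k‖) := by
              apply mul_le_mul_of_nonneg_left (norm_sub_le _ _) (le_of_lt hlam0)
          _ ≤ lam * (R + R) := by
              apply mul_le_mul_of_nonneg_left _ (le_of_lt hlam0)
              apply add_le_add _ (hnormv k)
              apply norm_le_of_mem_unit
              intro i
              show |(1:ℝ) / (2 * ((d:ℝ) + 1))| ≤ 1
              rw [abs_of_nonneg (by positivity)]
              rw [div_le_one (by positivity)]
              have : (0:ℝ) ≤ (d:ℝ) := Nat.cast_nonneg d
              linarith
          _ = B * lam := by rw [hB]; ring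
      have hdist : dist ξ (v k) < δ := by
        rw [dist_eq_norm]
        have : ξ - v k = t • (w (k+1) - w k) + (w k - v k) := by
          rw [hξ]; module
        rw [this]
        calc ‖t • (w (k+1) - w k) + (w k - v k)‖
            ≤ ‖t • (w (k+1) - w k)‖ + ‖w k - v k‖ := norm_add_le _ _
          _ ≤ ‖w (k+1) - w k‖ + B * lam := by
              apply add_le_add _ hd2
              rw [norm_smul, Real.norm_eq_abs, abs_of_nonneg ht.1]
              calc t * ‖w (k+1) - w k‖ ≤ 1 * ‖w (k+1) - w k‖ :=
                    mul_le_mul_of_nonneg_right ht.2 (norm_nonneg _)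
                _ = ‖w (k+1) - w k‖ := one_mul _
          _ ≤ δ/2 + δ/4 := add_le_add (le_trans hd1 (hNδ k hk)) hlamδ
          _ < δ := by linarith
      have hGclose : ‖G (v k) - G ξ‖ ≤ ε1 := by
        have := hδG ξ hξS (v k) (hvS k) hdist
        rw [dist_eq_norm] at this
        rw [← norm_neg]
        simp only [neg_sub]
        linarith
      -- inner product with G ξ
      have hmvt2 : ⟪G ξ, u k⟫ = (((k:ℝ)+1)/(1-lam)) * (a (k+1) - a k) := by
        have h1 : a (k+1) - a k = ⟪G ξ, w (k+1) - w k⟫ := hmvt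
        rw [hwdiff k hk1, real_inner_smul_right] at h1
        rw [h1]
        field_simp
      have hcs : ⟪G (v k) - G ξ, u k⟫ ≤ ε/2 := by
        calc ⟪G (v k) - G ξ, u k⟫ ≤ ‖G (v k) - G ξ‖ * ‖u k‖ := real_inner_le_norm _ _
          _ ≤ ε1 * B := by
              apply mul_le_mul hGclose (hnormu k) (norm_nonneg _)
              exact le_of_lt hε10
          _ = ε/2 := by rw [hε1]; field_simp
      have hsplit : ⟪G (v k), u k⟫ = ⟪G (v k) - G ξ, u k⟫ + ⟪G ξ, u k⟫ := by
        rw [inner_sub_left]; ring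
      have := hinner k hk1
      rw [hsplit, hmvt2] at this
      linarith
    -- summation machinery
    set S : ℕ → ℝ := fun n => ∑ k ∈ Finset.Ico N n, a k with hS
    set tt : ℕ → ℝ := fun n => S n / n with htt
    have hSsucc : ∀ n, N ≤ n → S (n+1) = S n + a n := by
      intro n hn
      rw [hS]
      simp only
      rw [Finset.sum_Ico_succ_top hn]
    have httbd : ∀ n, |tt n| ≤ M := by
      intro n
      rcases Nat.eq_zero_or_pos n with rfl | hn
      · show |S 0 / (0:ℕ)| ≤ M
        norm_num
        exact hM0
      have hn' : (0:ℝ) < n := by exact_mod_cast hn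
      show |S n / n| ≤ M
      rw [abs_div, abs_of_pos hn', div_le_iff₀ hn']
      calc |S n| ≤ ∑ k ∈ Finset.Ico N n, |a k| := Finset.abs_sum_le_sum_abs _ _
        _ ≤ ∑ k ∈ Finset.Ico N n, M := Finset.sum_le_sum fun k _ => haM k
        _ = ((n - N : ℕ) : ℝ) * M := by
            rw [Finset.sum_const, Nat.card_Ico, nsmul_eq_mul]
        _ ≤ M * n := by
            rw [mul_comm]
            apply mul_le_mul_of_nonneg_left _ hM0
            exact_mod_cast Nat.sub_le n N
    have hab : ∀ n, N ≤ n → ∑ k ∈ Finset.Ico N n, (((k:ℝ)+1) * (a (k+1) - a k))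
        = (n:ℝ) * a n - (N:ℝ) * a N - S n := by
      intro n hn
      induction n, hn using Nat.le_induction with
      | base => simp [hS]
      | succ n hn ih =>
        rw [Finset.sum_Ico_succ_top hn, ih, hSsucc n hn]
        push_cast
        ring
    have hb' : ∀ n, N ≤ n → (n:ℝ) * (((n:ℝ)+1) * (tt (n+1) - tt n))
        = (n:ℝ) * a n - S n := by
      intro n hn
      have hn1 : 1 ≤ n := le_trans hN1 hn
      have hn' : (0:ℝ) < n := by exact_mod_cast hn1
      have h1 : tt (n+1) = (S n + a n) / ((n:ℝ)+1) := by
        show S (n+1) / ((n:ℕ)+1 : ℕ) = _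
        rw [hSsucc n hn]
        push_cast
        ring
      have h2 : tt n = S n / n := rfl
      rw [h1, h2]
      field_simp
      ring
    -- the main estimate
    set DD : ℝ := (N:ℝ) * Mf + (N:ℝ) * |Qs| + (N:ℝ) * M / (1-lam) with hDD
    have hEst : ∀ n, N ≤ n → A n ≤ Qs + ε/2
        + (1/(1-lam)) * (((n:ℝ)+1) * (tt (n+1) - tt n)) + DD / n := by
      intro n hn
      have hn1 : 1 ≤ n := le_trans hN1 hn
      have hn' : (0:ℝ) < n := by exact_mod_cast hn1
      have hNn : ((N:ℝ)) ≤ (n:ℝ) := by exact_mod_cast hn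
      have hN0 : (0:ℝ) ≤ (N:ℝ) := Nat.cast_nonneg N
      -- bound on the prefix
      have h1 : ∑ k ∈ Finset.range N, f (x (k+1)) (barx k) ≤ (N:ℝ) * Mf := by
        calc ∑ k ∈ Finset.range N, f (x (k+1)) (barx k)
            ≤ ∑ k ∈ Finset.range N, Mf := Finset.sum_le_sum fun k _ =>
              le_trans (le_abs_self _) (hMf _ _ (hPdsub (hPdn k)))
          _ = (N:ℝ) * Mf := by simp [mul_comm]
      -- bound on the tail
      have h2 : ∑ k ∈ Finset.Ico N n, f (x (k+1)) (barx k)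
          ≤ ((n:ℝ) - N) * Qs + ((n:ℝ) - N) * (ε/2)
            + (1/(1-lam)) * ((n:ℝ) * a n - (N:ℝ) * a N - S n) := by
        calc ∑ k ∈ Finset.Ico N n, f (x (k+1)) (barx k)
            ≤ ∑ k ∈ Finset.Ico N n, (q (barx k) + ε/2
                + (1/(1-lam)) * (((k:ℝ)+1) * (a (k+1) - a k))) := by
              apply Finset.sum_le_sum
              intro k hkmem
              have hk := (Finset.mem_Ico.1 hkmem).1
              have := hkey k hk
              have heq : (((k:ℝ)+1)/(1-lam)) * (a (k+1) - a k)
                  = (1/(1-lam)) * (((k:ℝ)+1) * (a (k+1) - a k)) := by ring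
              linarith [heq ▸ this]
          _ = (∑ k ∈ Finset.Ico N n, (q (barx k) + ε/2))
              + (1/(1-lam)) * ∑ k ∈ Finset.Ico N n, (((k:ℝ)+1) * (a (k+1) - a k)) := by
              rw [Finset.mul_sum, ← Finset.sum_add_distrib]
          _ ≤ ((n:ℝ) - N) * Qs + ((n:ℝ) - N) * (ε/2)
              + (1/(1-lam)) * ((n:ℝ) * a n - (N:ℝ) * a N - S n) := by
              rw [hab n hn]
              apply add_le_add_left
              calc ∑ k ∈ Finset.Ico N n, (q (barx k) + ε/2)
                  ≤ ∑ k ∈ Finset.Ico N n, (Qs + ε/2) :=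
                    Finset.sum_le_sum fun k _ => by linarith [hQle k]
                _ = ((n - N : ℕ):ℝ) * (Qs + ε/2) := by
                    rw [Finset.sum_const, Nat.card_Ico, nsmul_eq_mul]
                _ = ((n:ℝ) - N) * Qs + ((n:ℝ) - N) * (ε/2) := by
                    rw [Nat.cast_sub hn]; ring
      -- combine
      have hsplitsum : ∑ k ∈ Finset.range n, f (x (k+1)) (barx k)
          = (∑ k ∈ Finset.range N, f (x (k+1)) (barx k))
            + ∑ k ∈ Finset.Ico N n, f (x (k+1)) (barx k) :=
        (Finset.sum_range_add_sum_Ico _ hn).symm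
      have hAn : A n = (∑ k ∈ Finset.range n, f (x (k+1)) (barx k)) / n := by
        rw [hA]; simp only; ring
      rw [hAn, div_le_iff₀ hn']
      have habs1 : -((N:ℝ) * Qs) ≤ (N:ℝ) * |Qs| := by
        have := neg_abs_le Qs
        nlinarith
      have habs2 : -((1/(1-lam)) * ((N:ℝ) * a N)) ≤ (N:ℝ) * M / (1-lam) := by
        have h3 : -(a N) ≤ M := by linarith [abs_le.1 (haM N)]
        have h4 : (0:ℝ) < 1/(1-lam) := by positivity
        calc -((1/(1-lam)) * ((N:ℝ) * a N)) = (1/(1-lam)) * ((N:ℝ) * (-(a N))) := by ring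
          _ ≤ (1/(1-lam)) * ((N:ℝ) * M) := by
              apply mul_le_mul_of_nonneg_left _ (le_of_lt h4)
              exact mul_le_mul_of_nonneg_left h3 hN0
          _ = (N:ℝ) * M / (1-lam) := by ring
      have hbn := hb' n hn
      have hDDn : DD / n * n = DD := by field_simp
      have hε2 : ((n:ℝ) - N) * (ε/2) ≤ (n:ℝ) * (ε/2) := by nlinarith
      -- final linear arithmetic
      have hexp : (Qs + ε/2 + (1/(1-lam)) * (((n:ℝ)+1) * (tt (n+1) - tt n)) + DD / n) * n
          = (n:ℝ) * Qs + (n:ℝ) * (ε/2)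
            + (1/(1-lam)) * ((n:ℝ) * a n - S n) + DD := by
        have : (1/(1-lam)) * (((n:ℝ)+1) * (tt (n+1) - tt n)) * n
            = (1/(1-lam)) * ((n:ℝ) * (((n:ℝ)+1) * (tt (n+1) - tt n))) := by ring
        calc (Qs + ε/2 + (1/(1-lam)) * (((n:ℝ)+1) * (tt (n+1) - tt n)) + DD / n) * n
            = (n:ℝ) * Qs + (n:ℝ) * (ε/2)
              + (1/(1-lam)) * ((n:ℝ) * (((n:ℝ)+1) * (tt (n+1) - tt n))) + DD / n * n := by
              ring
          _ = (n:ℝ) * Qs + (n:ℝ) * (ε/2)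
              + (1/(1-lam)) * ((n:ℝ) * a n - S n) + DD := by rw [hbn, hDDn]
      rw [hexp, hsplitsum, hDD]
      have hdistrib : (1/(1-lam)) * ((n:ℝ) * a n - (N:ℝ) * a N - S n)
          = (1/(1-lam)) * ((n:ℝ) * a n - S n) - (1/(1-lam)) * ((N:ℝ) * a N) := by ring
      linarith [h1, h2, habs1, habs2, hε2, hdistrib ▸ h2]
    -- conclusion by frequently
    have hfreq := freq_incr_le tt M httbd (ε := (1-lam) * (ε/4)) (by positivity)
    have hev : ∀ᶠ n : ℕ in Filter.atTop, N ≤ n ∧ DD / (n:ℝ) ≤ ε/4 := by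
      have hten : Filter.Tendsto (fun n : ℕ => DD / (n:ℝ)) Filter.atTop (nhds 0) :=
        tendsto_const_div_atTop_nhds_zero_nat DD
      have h5 : ∀ᶠ n : ℕ in Filter.atTop, DD / (n:ℝ) < ε/4 :=
        hten.eventually (gt_mem_nhds (by positivity))
      filter_upwards [Filter.eventually_ge_atTop N, h5] with n h6 h7
      exact ⟨h6, le_of_lt h7⟩
    have hfreq2 : ∃ᶠ n : ℕ in Filter.atTop, A n ≤ Qs + ε := by
      apply (hfreq.and_eventually hev).mono
      rintro n ⟨h8, h9, h10⟩
      have h11 := hEst n h9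
      have h12 : (1/(1-lam)) * (((n:ℝ)+1) * (tt (n+1) - tt n))
          ≤ (1/(1-lam)) * ((1-lam) * (ε/4)) := by
        apply mul_le_mul_of_nonneg_left h8 (by positivity)
      have h13 : (1/(1-lam)) * ((1-lam) * (ε/4)) = ε/4 := by field_simp
      linarith
    exact Filter.liminf_le_of_frequently_le hfreq2 hAlow
  refine le_of_forall_pos_le_add fun ε hε => ?_
  exact key ε hε
end
end

section
/- Under the same potential assumption, if the empirical frequencies bar x_n of a strategy x converge to some bar x_∞ ∈ P_{d+1}, then (1/n) Σ_{k=0}^{n−1} f_{x_{k+1}}(bar x_k) → q(bar x_∞) as n → ∞; in particular Q(x) = q(bar x_∞). -/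
noncomputable section

/-- If the empirical frequencies `x̄ n` converge to some `x̄_∞ ∈ P_{d+1}`, then the
average payoff `(1/n) ∑_{k<n} f (x (k+1)) (x̄ k)` converges to `q (x̄_∞)`;
in particular `Q(x) = q (x̄_∞)`. -/
theorem bandit_convergent_case (d : ℕ)
    (f : Fin (d + 1) → (Fin (d + 1) → ℝ) → ℝ)
    (hf : ∀ i, ContinuousOn (f i) (Set.Icc (0 : Fin (d + 1) → ℝ) 1))
    (Φ : EuclideanSpace ℝ (Fin d) → ℝ)
    (G : EuclideanSpace ℝ (Fin d) → EuclideanSpace ℝ (Fin d))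
    (hGcont : ContinuousOn G (Sd d))
    (hgrad : ∀ v ∈ interior (Sd d), HasGradientAt Φ (G v) v)
    (hG : ∀ v ∈ Sd d, ∀ i : Fin d, G v i = f i.succ (tilde v) - f 0 (tilde v))
    (x : ℕ → Fin (d + 1)) (barx : ℕ → Fin (d + 1) → ℝ)
    (hbar0 : barx 0 ∈ Pd d)
    (hbar : ∀ n, 1 ≤ n → ∀ i,
      barx n i = (1 / (n : ℝ)) * ∑ k ∈ Finset.Icc 1 n, (if x k = i then (1 : ℝ) else 0))
    (q : (Fin (d + 1) → ℝ) → ℝ) (hq : ∀ u, q u = ∑ i, u i * f i u)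
    (xinf : Fin (d + 1) → ℝ) (hxinf : xinf ∈ Pd d)
    (hconv : Filter.Tendsto barx Filter.atTop (nhds xinf)) :
    Filter.Tendsto
      (fun n : ℕ => (1 / (n : ℝ)) * ∑ k ∈ Finset.range n, f (x (k + 1)) (barx k))
      Filter.atTop (nhds (q xinf))
    ∧ Filter.liminf
        (fun n : ℕ => (1 / (n : ℝ)) * ∑ k ∈ Finset.range n, f (x (k + 1)) (barx k))
        Filter.atTop = q xinf := by
  classical
  -- membership of barx n in Icc 0 1
  have hmem : ∀ n, barx n ∈ Set.Icc (0 : Fin (d + 1) → ℝ) 1 := by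
    intro n
    rcases Nat.eq_zero_or_pos n with h0 | hpos
    · subst h0
      constructor
      · intro i; exact (hbar0.1 i).1
      · intro i; exact (hbar0.1 i).2
    · have hnpos : (0 : ℝ) < n := by exact_mod_cast hpos
      constructor
      · intro i
        rw [hbar n hpos i]
        apply mul_nonneg (by positivity)
        apply Finset.sum_nonneg
        intro k _; split <;> norm_num
      · intro i
        have hle : (∑ k ∈ Finset.Icc 1 n, (if x k = i then (1 : ℝ) else 0)) ≤ n := by
          calc (∑ k ∈ Finset.Icc 1 n, (if x k = i then (1 : ℝ) else 0))
              ≤ ∑ k ∈ Finset.Icc 1 n, (1 : ℝ) := by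
                apply Finset.sum_le_sum; intro k _; split <;> norm_num
            _ = n := by
                rw [Finset.sum_const, Nat.card_Icc]; simp
        have : barx n i ≤ 1 := by
          rw [hbar n hpos i]
          calc (1 / (n : ℝ)) * ∑ k ∈ Finset.Icc 1 n, (if x k = i then (1 : ℝ) else 0)
              ≤ (1 / (n : ℝ)) * n := by
                apply mul_le_mul_of_nonneg_left hle (by positivity)
            _ = 1 := by field_simp
        simpa using this
  have hxmem : xinf ∈ Set.Icc (0 : Fin (d + 1) → ℝ) 1 :=
    ⟨fun i => (hxinf.1 i).1, fun i => (hxinf.1 i).2⟩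
  -- f i (barx k) → f i xinf
  have hfi : ∀ i, Filter.Tendsto (fun k => f i (barx k)) Filter.atTop (nhds (f i xinf)) := by
    intro i
    have h1 : Filter.Tendsto barx Filter.atTop
        (nhdsWithin xinf (Set.Icc (0 : Fin (d + 1) → ℝ) 1)) :=
      tendsto_nhdsWithin_of_tendsto_nhds_of_eventually_within _ hconv
        (Filter.Eventually.of_forall hmem)
    exact ((hf i xinf hxmem).tendsto).comp h1
  -- coordinatewise convergence of barx
  have hcoord : ∀ i, Filter.Tendsto (fun n => barx n i) Filter.atTop (nhds (xinf i)) :=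
    fun i => (tendsto_pi_nhds.1 hconv) i
  -- indicator
  set ind : ℕ → Fin (d + 1) → ℝ := fun k i => if x (k + 1) = i then (1 : ℝ) else 0 with hind
  -- empirical frequency as range sum
  have hfreq : ∀ i, ∀ n : ℕ, 1 ≤ n →
      (1 / (n : ℝ)) * ∑ k ∈ Finset.range n, ind k i = barx n i := by
    intro i n hn
    rw [hbar n hn i]
    congr 1
    have : Finset.Icc 1 n = Finset.Ico 1 (n + 1) := by
      rw [Finset.Ico_add_one_right_eq_Icc]
    rw [this, Finset.sum_Ico_eq_sum_range]
    simp only [Nat.add_sub_cancel]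
    apply Finset.sum_congr rfl
    intro k _
    simp [ind, add_comm 1 k]
  -- per-coordinate limit
  have hu : ∀ i, Filter.Tendsto
      (fun n : ℕ => (1 / (n : ℝ)) * ∑ k ∈ Finset.range n, ind k i * f i (barx k))
      Filter.atTop (nhds (xinf i * f i xinf)) := by
    intro i
    have hdecomp : ∀ n : ℕ,
        (1 / (n : ℝ)) * ∑ k ∈ Finset.range n, ind k i * f i (barx k)
        = f i xinf * ((1 / (n : ℝ)) * ∑ k ∈ Finset.range n, ind k i)
          + (1 / (n : ℝ)) * ∑ k ∈ Finset.range n, ind k i * (f i (barx k) - f i xinf) := by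
      intro n
      rw [show (∑ k ∈ Finset.range n, ind k i * f i (barx k))
          = f i xinf * (∑ k ∈ Finset.range n, ind k i)
            + ∑ k ∈ Finset.range n, ind k i * (f i (barx k) - f i xinf) from by
        rw [Finset.mul_sum, ← Finset.sum_add_distrib]
        exact Finset.sum_congr rfl fun k _ => by ring]
      ring
    -- first piece
    have h1 : Filter.Tendsto (fun n : ℕ => (1 / (n : ℝ)) * ∑ k ∈ Finset.range n, ind k i)
        Filter.atTop (nhds (xinf i)) := by
      apply Filter.Tendsto.congr' _ (hcoord i)
      filter_upwards [Filter.eventually_ge_atTop 1] with n hn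
      exact (hfreq i n hn).symm
    -- second piece : Cesàro of a null sequence
    have h2 : Filter.Tendsto
        (fun n : ℕ => (1 / (n : ℝ)) * ∑ k ∈ Finset.range n, ind k i * (f i (barx k) - f i xinf))
        Filter.atTop (nhds 0) := by
      have hz : Filter.Tendsto (fun k => ind k i * (f i (barx k) - f i xinf))
          Filter.atTop (nhds 0) := by
        apply squeeze_zero_norm (a := fun k => |f i (barx k) - f i xinf|)
        · intro k
          rw [Real.norm_eq_abs, abs_mul]
          have : |ind k i| ≤ 1 := by simp only [ind]; split <;> simp
          calc |ind k i| * |f i (barx k) - f i xinf|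
              ≤ 1 * |f i (barx k) - f i xinf| :=
                mul_le_mul_of_nonneg_right this (abs_nonneg _)
            _ = |f i (barx k) - f i xinf| := one_mul _
        · have : Filter.Tendsto (fun k => f i (barx k) - f i xinf) Filter.atTop (nhds 0) := by
            simpa using (hfi i).sub (tendsto_const_nhds (x := f i xinf))
          simpa using this.abs
      have := hz.cesaro
      simpa [one_div] using this
    have := h1.const_mul (f i xinf) |>.add h2
    rw [add_zero, mul_comm (f i xinf) (xinf i)] at this
    exact this.congr fun n => (hdecomp n).symm
  -- total limit
  have hmain : Filter.Tendsto
      (fun n : ℕ => (1 / (n : ℝ)) * ∑ k ∈ Finset.range n, f (x (k + 1)) (barx k))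
      Filter.atTop (nhds (q xinf)) := by
    have hsum : ∀ n : ℕ,
        (1 / (n : ℝ)) * ∑ k ∈ Finset.range n, f (x (k + 1)) (barx k)
        = ∑ i, (1 / (n : ℝ)) * ∑ k ∈ Finset.range n, ind k i * f i (barx k) := by
      intro n
      rw [← Finset.mul_sum]
      congr 1
      rw [Finset.sum_comm]
      apply Finset.sum_congr rfl
      intro k _
      have : ∀ i, ind k i * f i (barx k) = if x (k + 1) = i then f i (barx k) else 0 := by
        intro i; simp only [ind]; split <;> simp
      simp only [this]
      rw [Finset.sum_ite_eq]
      simp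
    have htot : Filter.Tendsto
        (fun n : ℕ => ∑ i, (1 / (n : ℝ)) * ∑ k ∈ Finset.range n, ind k i * f i (barx k))
        Filter.atTop (nhds (∑ i, xinf i * f i xinf)) :=
      tendsto_finset_sum _ fun i _ => hu i
    rw [hq]
    exact htot.congr fun n => (hsum n).symm
  exact ⟨hmain, hmain.liminf_eq⟩

end
end

section
/- For f_0(x) = a x and f_1(x) = b(1−x) with a, b > 0, the empirical frequencies bar x_n of the greedy strategy (play 1 iff f_1(bar x_{n−1}) ≥ f_0(bar x_{n−1})) converge to b/(a+b), and (1/n) Σ_{k=0}^{n−1} f_{x_{k+1}}(bar x_k) → ab/(a+b). -/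
open Filter

/-- For `f₀ x = a x`, `f₁ x = b (1-x)` with `a, b > 0`, the empirical frequencies of the
greedy strategy converge to `b/(a+b)` and the average payoff converges to `ab/(a+b)`. -/
theorem greedy_dynamics_limit (a b : ℝ) (ha : 0 < a) (hb : 0 < b)
    (x : ℕ → ℕ) (bx : ℕ → ℝ) (hbx0 : bx 0 ∈ Set.Icc (0:ℝ) 1)
    (hbx : ∀ n : ℕ, 1 ≤ n →
      bx n = (1 / (n : ℝ)) * ∑ k ∈ Finset.Icc 1 n, (if x k = 1 then (1:ℝ) else 0))
    (hgreedy : ∀ n, x (n + 1) = if a * bx n ≤ b * (1 - bx n) then 1 else 0) :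
    Filter.Tendsto bx Filter.atTop (nhds (b / (a + b)))
    ∧ Filter.Tendsto
        (fun n : ℕ => (1 / (n : ℝ)) * ∑ k ∈ Finset.range n,
          (if x (k + 1) = 1 then b * (1 - bx k) else a * bx k))
        Filter.atTop (nhds (a * b / (a + b))) := by
  have hab : 0 < a + b := by linarith
  set c : ℝ := b / (a + b) with hc
  have hc0 : 0 < c := div_pos hb hab
  have hc1 : c < 1 := by rw [hc, div_lt_one hab]; linarith
  have hiff : ∀ n, (a * bx n ≤ b * (1 - bx n)) ↔ bx n ≤ c := by
    intro n
    rw [hc, le_div_iff₀ hab]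
    constructor <;> intro h <;> nlinarith
  -- recurrence
  have hrec : ∀ n : ℕ, ((n : ℝ) + 1) * bx (n + 1)
      = (n : ℝ) * bx n + (if x (n + 1) = 1 then (1:ℝ) else 0) := by
    intro n
    have h1 := hbx (n + 1) (by omega)
    cases n with
    | zero =>
      rw [h1, Finset.Icc_self, Finset.sum_singleton]
      norm_num
    | succ m =>
      have h2 := hbx (m + 1) (by omega)
      rw [h1, h2, Finset.sum_Icc_succ_top (by omega : 1 ≤ m + 1 + 1)]
      have h3 : ((m : ℝ) + 1) ≠ 0 := by positivity
      have h4 : ((m : ℝ) + 1 + 1) ≠ 0 := by positivity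
      push_cast
      field_simp
  -- key bound
  have key : ∀ n : ℕ, 1 ≤ n → |(n : ℝ) * bx n - (n : ℝ) * c| ≤ 1 := by
    intro n hn
    induction n with
    | zero => omega
    | succ m ih =>
      have hr := hrec m
      by_cases hm : m = 0
      · subst hm
        norm_num at hr ⊢
        rw [hr, abs_le]
        split <;> constructor <;> linarith
      · have hm1 : 1 ≤ m := by omega
        have ihm := ih hm1
        rw [abs_le] at ihm
        have hx := hgreedy m
        push_cast
        rw [abs_le]
        by_cases hcase : bx m ≤ c
        · have hx1 : x (m + 1) = 1 := by
            rw [hx, if_pos ((hiff m).mpr hcase)]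
          rw [hx1] at hr
          norm_num at hr
          have hmul : (m : ℝ) * bx m ≤ (m : ℝ) * c :=
            mul_le_mul_of_nonneg_left hcase (Nat.cast_nonneg m)
          constructor <;> linarith
        · have hx0 : x (m + 1) = 0 := by
            rw [hx, if_neg]
            intro h
            exact hcase ((hiff m).mp h)
          rw [hx0] at hr
          norm_num at hr
          push_neg at hcase
          have hmul : (m : ℝ) * c ≤ (m : ℝ) * bx m :=
            mul_le_mul_of_nonneg_left hcase.le (Nat.cast_nonneg m)
          constructor <;> linarith
  -- first limit
  have h1 : Tendsto bx atTop (nhds c) := by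
    have hz : Tendsto (fun n : ℕ => bx n - c) atTop (nhds 0) := by
      apply squeeze_zero_norm' (a := fun n : ℕ => 1 / (n : ℝ))
      · filter_upwards [eventually_ge_atTop 1] with n hn
        have hk := key n hn
        have hn0 : (0 : ℝ) < n := by exact_mod_cast hn
        rw [Real.norm_eq_abs, le_div_iff₀ hn0]
        calc |bx n - c| * n = |(bx n - c) * (n : ℝ)| := by
              rw [abs_mul, abs_of_pos hn0]
          _ = |(n : ℝ) * bx n - (n : ℝ) * c| := by congr 1; ring
          _ ≤ 1 := hk
      · exact tendsto_one_div_atTop_nhds_zero_nat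
    have := hz.add_const c
    simpa using this
  refine ⟨h1, ?_⟩
  -- payoff
  have hpt : ∀ k : ℕ, (if x (k + 1) = 1 then b * (1 - bx k) else a * bx k)
      = max (a * bx k) (b * (1 - bx k)) := by
    intro k
    by_cases hcase : a * bx k ≤ b * (1 - bx k)
    · rw [hgreedy k, if_pos hcase, if_pos rfl, max_eq_right hcase]
    · rw [hgreedy k, if_neg hcase, if_neg (by norm_num : (0:ℕ) ≠ 1),
        max_eq_left (le_of_not_ge hcase)]
  have hmax : Tendsto (fun k : ℕ => max (a * bx k) (b * (1 - bx k))) atTop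
      (nhds (a * b / (a + b))) := by
    have hA : Tendsto (fun k : ℕ => a * bx k) atTop (nhds (a * c)) :=
      (tendsto_const_nhds.mul h1)
    have hB : Tendsto (fun k : ℕ => b * (1 - bx k)) atTop (nhds (b * (1 - c))) :=
      tendsto_const_nhds.mul (tendsto_const_nhds.sub h1)
    have hmax' := hA.max hB
    have hac : a * c = a * b / (a + b) := by rw [hc]; field_simp
    have hbc : b * (1 - c) = a * b / (a + b) := by rw [hc]; field_simp; ring
    rw [hac, hbc, max_self] at hmax'
    exact hmax'
  have := hmax.cesaro
  refine this.congr fun n => ?_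
  rw [one_div]
  congr 1
  exact Finset.sum_congr rfl fun k _ => (hpt k).symm
end
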